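/- Let S ⊊ ℕ be a numerical semigroup and m an odd element of S. Then ℕ \ S is an upper m-set of S if and only if m > F(S). -/
import Mathlib


/-- A numerical semigroup: a submonoid of (ℕ,+) with finite complement. -/
def IsNumericalSemigroup (S : Set ℕ) : Prop :=
  0 ∈ S ∧ (∀ a ∈ S, ∀ b ∈ S, a + b ∈ S) ∧ Sᶜ.Finite

/-- The quotient S/d = {x ∈ ℕ : d*x ∈ S}. -/
def NumQuot (S : Set ℕ) (d : ℕ) : Set ℕ := {x | d * x ∈ S}

/-- The Frobenius number of S (for S ≠ ℕ): the maximum of the complement. -/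
noncomputable def frob (S : Set ℕ) : ℕ := sSup Sᶜ

/-- The multiplicity of S: the least positive element. -/
noncomputable def mult (S : Set ℕ) : ℕ := sInf (S \ {0})

/-- T is an arithmetic extension of S if T = {x : d₁x,...,dₙx ∈ S} for some
positive integers d₁,...,dₙ. -/
def IsArithmeticExtension (S T : Set ℕ) : Prop :=
  ∃ D : Finset ℕ, D.Nonempty ∧ (∀ d ∈ D, 0 < d) ∧ T = {x | ∀ d ∈ D, d * x ∈ S}

/-- An arithmetic variety: a nonempty family of numerical semigroups closed under
pairwise intersections and arithmetic extensions. -/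
def IsArithmeticVariety (𝒜 : Set (Set ℕ)) : Prop :=
  𝒜.Nonempty ∧ (∀ S ∈ 𝒜, IsNumericalSemigroup S) ∧
    (∀ S ∈ 𝒜, ∀ T ∈ 𝒜, S ∩ T ∈ 𝒜) ∧
    (∀ S ∈ 𝒜, ∀ T : Set ℕ, IsArithmeticExtension S T → T ∈ 𝒜)

/-- An upper m-set of S: H ⊆ ℕ \ S with (C1) h+m ∈ S, (C2) h₁+h₂+m ∈ S,
(C3) if h ∈ H, x ∉ S and x - h ∈ S then x ∈ H. -/
def IsUpperMSet (S : Set ℕ) (m : ℕ) (H : Set ℕ) : Prop :=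
  H ⊆ Sᶜ ∧ (∀ h ∈ H, h + m ∈ S) ∧ (∀ h₁ ∈ H, ∀ h₂ ∈ H, h₁ + h₂ + m ∈ S) ∧
    (∀ h ∈ H, ∀ x : ℕ, x ∉ S → h ≤ x → x - h ∈ S → x ∈ H)

theorem compl_upperMSet_iff (S : Set ℕ) (hS : IsNumericalSemigroup S)
    (hS' : S ≠ Set.univ) (m : ℕ) (hm : m ∈ S) (hodd : Odd m) :
    IsUpperMSet S m Sᶜ ↔ frob S < m := by
  obtain ⟨h0, hadd, hfin⟩ := hS
  have hne : Sᶜ.Nonempty := by rw [Set.nonempty_compl]; exact hS'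
  have hFmem : frob S ∈ Sᶜ := hne.csSup_mem hfin
  have hbound : ∀ x ∉ S, x ≤ frob S := fun x hx => le_csSup hfin.bddAbove hx
  constructor
  · rintro ⟨_, hC1, _, _⟩
    by_contra hlt
    push_neg at hlt
    by_cases hFm : frob S - m ∈ S
    · have := hadd _ hFm _ hm
      rw [Nat.sub_add_cancel hlt] at this
      exact hFmem this
    · have := hC1 _ hFm
      rw [Nat.sub_add_cancel hlt] at this
      exact hFmem this
  · intro hFm
    refine ⟨subset_rfl, ?_, ?_, ?_⟩
    · intro h hh
      by_contra hc
      have := hbound _ hc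
      omega
    · intro h1 h1m h2 h2m
      by_contra hc
      have := hbound _ hc
      omega
    · intro h _ x hx _ _; exact hx
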